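/- Assume Σ_A⁺ is transitive, let φ : Σ_A⁺ → ℝ be Hölder, and let (P, μ) be a conformal pair for φ. Let n ≥ 1 and let v, w be admissible words of length n. Let Dom = {z ∈ [v] : A (w (n−1)) (z n)} and define T : Dom → [w] by (T z) i = w i for i < n and (T z) i = z i for i ≥ n (so that σⁿ(T z) = σⁿ(z)). Then T is injective, and for every Borel set E ⊆ Dom one has μ(T '' E) = ∫_E exp( Σ_{k=0}^{n−1} ( φ(σ^k (T z)) − φ(σ^k z) ) ) dμ(z). -/

import Mathlib

open MeasureTheory Real
open scoped ENNReal

variable {r : ℕ}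

/-- The one-sided subshift of finite type determined by the transition
matrix `A`. -/
abbrev OneSided (A : Fin r → Fin r → Prop) : Type :=
  {x : ℕ → Fin r // ∀ i, A (x i) (x (i + 1))}

/-- The shift map `σ` on the one-sided subshift. -/
def shift1 {A : Fin r → Fin r → Prop} (x : OneSided A) : OneSided A :=
  ⟨fun i => x.1 (i + 1), fun i => x.2 (i + 1)⟩

/-- The metric `d(x,y) = ∑_{i ∈ ℕ, x i ≠ y i} 2^{-i}` on the one-sided
subshift. -/
noncomputable def dist1 {A : Fin r → Fin r → Prop} (x y : OneSided A) : ℝ :=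
  ∑' i : ℕ, if x.1 i ≠ y.1 i then ((2 : ℝ)⁻¹) ^ i else 0

/-- `ψ` is Hölder with respect to the distance function `d`. -/
def IsHolderWrt {X : Type*} (d : X → X → ℝ) (ψ : X → ℝ) : Prop :=
  ∃ C > 0, ∃ α ∈ Set.Ioc (0 : ℝ) 1, ∀ x y, |ψ x - ψ y| ≤ C * d x y ^ α

/-- A word `w : Fin n → Fin r` is admissible if `A (w i) (w (i+1))` for all
`i < n − 1`. -/
def AdmissibleWord {n : ℕ} (A : Fin r → Fin r → Prop) (w : Fin n → Fin r) : Prop :=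
  ∀ i : ℕ, ∀ h : i + 1 < n, A (w ⟨i, Nat.lt_of_succ_lt h⟩) (w ⟨i + 1, h⟩)

/-- The `n`-cylinder `[w]` of a word `w : Fin n → Fin r`. -/
def Cyl (A : Fin r → Fin r → Prop) {n : ℕ} (w : Fin n → Fin r) : Set (OneSided A) :=
  {x | ∀ i : Fin n, x.1 i = w i}

/-- `(P, μ)` is a conformal pair for `φ`: `μ` is a Borel probability measure
with `μ(σ '' E) = ∫_E exp(P − φ) dμ` for every Borel `E` contained in a
1-cylinder.  This encodes `log(dμ(σx)/dμ(x)) = −φ(x) + P`. -/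
def ConformalPair (A : Fin r → Fin r → Prop) (φ : OneSided A → ℝ) (P : ℝ)
    (μ : Measure (OneSided A)) : Prop :=
  IsProbabilityMeasure μ ∧
    ∀ (j : Fin r) (E : Set (OneSided A)), MeasurableSet E → (∀ x ∈ E, x.1 0 = j) →
      μ (shift1 '' E) = ∫⁻ x in E, ENNReal.ofReal (Real.exp (P - φ x)) ∂μ

/-- `Σ_A⁺` is transitive: some point has dense forward orbit under `σ`. -/
def Transitive1 (A : Fin r → Fin r → Prop) : Prop :=
  ∃ x : OneSided A, Dense (Set.range fun n : ℕ => shift1^[n] x)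

/-- `Σ_A⁺` is mixing with constant `M`: for all symbols `i`, `j` there is an
admissible word of length `M+1` beginning with `i` and ending with `j`. -/
def MixingWith (A : Fin r → Fin r → Prop) (M : ℕ) : Prop :=
  1 ≤ M ∧ ∀ i j : Fin r, ∃ w : Fin (M + 1) → Fin r,
    AdmissibleWord A w ∧ w 0 = i ∧ w (Fin.last M) = j


open Classical in
/-- The map `T` on `{z ∈ [v] : A (w (n−1)) (z n)}` replacing the first `n`
coordinates of `z` by the word `w` (so that `σⁿ(T z) = σⁿ(z)`); off that
domain it is extended by the identity. -/
noncomputable def Tmap {A : Fin r → Fin r → Prop} {n : ℕ} (hn : 1 ≤ n)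
    (w : Fin n → Fin r) (hw : AdmissibleWord A w) (z : OneSided A) : OneSided A :=
  if hlink : A (w ⟨n - 1, by omega⟩) (z.1 n) then
    ⟨fun i => if h : i < n then w ⟨i, h⟩ else z.1 i, by
      intro i
      rcases lt_trichotomy (i + 1) n with h | h | h
      · have h1 : i < n := by omega
        simp only [dif_pos h1, dif_pos h]
        exact hw i h
      · have h1 : i < n := by omega
        have h2 : ¬ i + 1 < n := by omega
        simp only [dif_pos h1, dif_neg h2]
        have e1 : (⟨i, h1⟩ : Fin n) = ⟨n - 1, by omega⟩ := by
          apply Fin.ext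
          show i = n - 1
          omega
        have hz : z.1 (i + 1) = z.1 n := by rw [h]
        rw [e1, hz]
        exact hlink
      · have h1 : ¬ i < n := by omega
        have h2 : ¬ i + 1 < n := by omega
        simp only [dif_neg h1, dif_neg h2]
        exact z.2 i⟩
  else z

namespace Scratch

variable {A : Fin r → Fin r → Prop}

lemma measurable_coord (i : ℕ) : Measurable fun x : OneSided A => x.1 i :=
  (measurable_pi_apply i).comp measurable_subtype_coe

lemma measurable_shift1 : Measurable (shift1 : OneSided A → OneSided A) :=
  Measurable.subtype_mk (measurable_pi_lambda _ fun i => measurable_coord (i + 1))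

lemma shift_iter_coord (m : ℕ) (x : OneSided A) (i : ℕ) :
    (shift1^[m] x).1 i = x.1 (i + m) := by
  induction m generalizing x i with
  | zero => rfl
  | succ m ih =>
    rw [Function.iterate_succ_apply, ih]; rfl

lemma dist1_nonneg (x y : OneSided A) : 0 ≤ dist1 x y :=
  tsum_nonneg fun i => by split <;> positivity

lemma summable_dist (x y : OneSided A) :
    Summable fun i : ℕ => if x.1 i ≠ y.1 i then ((2 : ℝ)⁻¹) ^ i else 0 := by
  apply Summable.of_nonneg_of_le (fun i => by split <;> positivity)
    (fun i => ?_) (summable_geometric_of_lt_one (r := (2:ℝ)⁻¹) (by norm_num) (by norm_num))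
  split
  · exact le_refl _
  · positivity

lemma summable_tail (N : ℕ) :
    Summable fun i : ℕ => if i < N then (0 : ℝ) else ((2 : ℝ)⁻¹) ^ i := by
  apply Summable.of_nonneg_of_le (fun i => by split <;> positivity)
    (fun i => ?_) (summable_geometric_of_lt_one (r := (2:ℝ)⁻¹) (by norm_num) (by norm_num))
  split
  · positivity
  · exact le_refl _

lemma tsum_tail (N : ℕ) :
    (∑' i : ℕ, if i < N then (0 : ℝ) else ((2 : ℝ)⁻¹) ^ i) = 2 * (2 : ℝ)⁻¹ ^ N := by
  have h := Summable.sum_add_tsum_nat_add (f := fun i : ℕ => if i < N then (0 : ℝ) else ((2 : ℝ)⁻¹) ^ i)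
    N (summable_tail N)
  have h1 : (∑ i ∈ Finset.range N, if i < N then (0 : ℝ) else ((2 : ℝ)⁻¹) ^ i) = 0 :=
    Finset.sum_eq_zero fun i hi => by simp [Finset.mem_range.mp hi]
  have h2 : (∑' i : ℕ, if i + N < N then (0 : ℝ) else ((2 : ℝ)⁻¹) ^ (i + N)) =
      2 * (2 : ℝ)⁻¹ ^ N := by
    have : ∀ i : ℕ, (if i + N < N then (0 : ℝ) else ((2 : ℝ)⁻¹) ^ (i + N)) =
        ((2 : ℝ)⁻¹) ^ i * ((2 : ℝ)⁻¹) ^ N := by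
      intro i
      rw [if_neg (by omega), pow_add]
    rw [tsum_congr this, tsum_mul_right, tsum_geometric_of_lt_one (by norm_num) (by norm_num)]
    norm_num
  rw [← h, h1, h2, zero_add]

lemma dist1_le_of_agree {x y : OneSided A} {N : ℕ} (h : ∀ i < N, x.1 i = y.1 i) :
    dist1 x y ≤ 2 * (2 : ℝ)⁻¹ ^ N := by
  rw [← tsum_tail N]
  apply Summable.tsum_le_tsum _ (summable_dist x y) (summable_tail N)
  intro i
  by_cases hi : i < N
  · simp [hi, h i hi]
  · simp only [if_neg hi]
    split
    · exact le_refl _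
    · positivity

lemma measurable_of_holder (φ : OneSided A → ℝ) (hφ : IsHolderWrt dist1 φ) :
    Measurable φ := by
  classical
  obtain ⟨C, hC, α, hα, hH⟩ := hφ
  let g : ∀ N : ℕ, (Fin N → Fin r) → ℝ := fun N p =>
    if h : ∃ y : OneSided A, ∀ i : Fin N, y.1 i = p i then φ h.choose else 0
  let ψ : ℕ → OneSided A → ℝ := fun N x => g N fun i => x.1 i
  have hmeas : ∀ N, Measurable (ψ N) := fun N =>
    (measurable_of_countable (g N)).comp (measurable_pi_lambda _ fun i => measurable_coord i)
  have hlim : ∀ x, Filter.Tendsto (fun N => ψ N x) Filter.atTop (nhds (φ x)) := by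
    intro x
    have hb : ∀ N, ‖ψ N x - φ x‖ ≤ C * (2 * (2 : ℝ)⁻¹ ^ N) ^ α := by
      intro N
      have hex : ∃ y : OneSided A, ∀ i : Fin N, y.1 i = x.1 i := ⟨x, fun i => rfl⟩
      have hψ : ψ N x = φ hex.choose := by simp only [ψ, g, dif_pos hex]
      have hagree : ∀ i < N, hex.choose.1 i = x.1 i := fun i hi => hex.choose_spec ⟨i, hi⟩
      have hd : dist1 hex.choose x ≤ 2 * (2 : ℝ)⁻¹ ^ N := dist1_le_of_agree hagree
      calc ‖ψ N x - φ x‖ = |φ hex.choose - φ x| := by rw [hψ]; rfl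
        _ ≤ C * dist1 hex.choose x ^ α := hH _ _
        _ ≤ C * (2 * (2 : ℝ)⁻¹ ^ N) ^ α := by
            apply mul_le_mul_of_nonneg_left _ hC.le
            exact Real.rpow_le_rpow (dist1_nonneg _ _) hd hα.1.le
    have htendsto : Filter.Tendsto (fun N => C * (2 * (2 : ℝ)⁻¹ ^ N) ^ α)
        Filter.atTop (nhds 0) := by
      have h1 : Filter.Tendsto (fun N : ℕ => 2 * (2 : ℝ)⁻¹ ^ N) Filter.atTop (nhds 0) := by
        have := (tendsto_pow_atTop_nhds_zero_of_lt_one (by norm_num : (0:ℝ) ≤ 2⁻¹)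
          (by norm_num : (2:ℝ)⁻¹ < 1)).const_mul (2 : ℝ)
        simpa using this
      have h2 : ContinuousAt (fun t : ℝ => C * t ^ α) 0 := by
        apply ContinuousAt.mul continuousAt_const
        exact Real.continuousAt_rpow_const 0 α (Or.inr hα.1.le)
      have := h2.tendsto.comp h1
      simpa [Function.comp_def, Real.zero_rpow (ne_of_gt hα.1)] using this
    have h0 : Filter.Tendsto (fun N => ψ N x - φ x) Filter.atTop (nhds 0) :=
      squeeze_zero_norm hb htendsto
    have := h0.add_const (φ x)
    simpa using this
  exact measurable_of_tendsto_metrizable hmeas (tendsto_pi_nhds.mpr hlim)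


open Classical in
noncomputable def Cmap (j : Fin r) (y : OneSided A) : OneSided A :=
  if hlink : A j (y.1 0) then
    ⟨fun i => if i = 0 then j else y.1 (i - 1), by
      intro i
      rcases Nat.eq_zero_or_pos i with h | h
      · subst h
        simp only [if_pos rfl, if_neg (by omega : ¬ (0 + 1 = 0))]
        simpa using hlink
      · have h1 : ¬ i = 0 := by omega
        have h2 : ¬ i + 1 = 0 := by omega
        simp only [if_neg h1, if_neg h2]
        have e : i + 1 - 1 = (i - 1) + 1 := by omega
        rw [e]
        exact y.2 (i - 1)⟩
  else y

open Classical in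
noncomputable def Wmap {n : ℕ} (hn : 1 ≤ n) (w : Fin n → Fin r)
    (hw : AdmissibleWord A w) (z : OneSided A) : OneSided A :=
  if hlink : A (w ⟨n - 1, by omega⟩) (z.1 0) then
    ⟨fun i => if h : i < n then w ⟨i, h⟩ else z.1 (i - n), by
      intro i
      rcases lt_trichotomy (i + 1) n with h | h | h
      · have h1 : i < n := by omega
        simp only [dif_pos h1, dif_pos h]
        exact hw i h
      · have h1 : i < n := by omega
        have h2 : ¬ i + 1 < n := by omega
        simp only [dif_pos h1, dif_neg h2]
        have e1 : (⟨i, h1⟩ : Fin n) = ⟨n - 1, by omega⟩ := by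
          apply Fin.ext; show i = n - 1; omega
        have e2 : i + 1 - n = 0 := by omega
        rw [e1, e2]; exact hlink
      · have h1 : ¬ i < n := by omega
        have h2 : ¬ i + 1 < n := by omega
        simp only [dif_neg h1, dif_neg h2]
        have e2 : i + 1 - n = (i - n) + 1 := by omega
        rw [e2]; exact z.2 (i - n)⟩
  else z

lemma Cmap_coord {j : Fin r} {y : OneSided A} (hA : A j (y.1 0)) (i : ℕ) :
    (Cmap j y).1 i = if i = 0 then j else y.1 (i - 1) := by
  unfold Cmap
  rw [dif_pos hA]

lemma Wmap_coord {n : ℕ} {hn : 1 ≤ n} {w : Fin n → Fin r} {hw : AdmissibleWord A w}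
    {z : OneSided A} (hA : A (w ⟨n - 1, by omega⟩) (z.1 0)) (i : ℕ) :
    (Wmap hn w hw z).1 i = if h : i < n then w ⟨i, h⟩ else z.1 (i - n) := by
  unfold Wmap
  rw [dif_pos hA]

open Classical in
lemma measurable_patch {p : OneSided A → Prop} (hp : MeasurableSet {z | p z})
    {F : OneSided A → ℕ → Fin r} (hF : Measurable F)
    {f : OneSided A → OneSided A}
    (hf : ∀ z, (f z).1 = if p z then F z else z.1) : Measurable f := by
  have h1 : Measurable fun z : OneSided A => (f z).1 := by
    have h2 : (fun z : OneSided A => (f z).1) = fun z => if p z then F z else z.1 :=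
      funext hf
    rw [h2]
    exact Measurable.ite hp hF measurable_subtype_coe
  have h3 : f = fun z => (⟨(f z).1, (f z).2⟩ : OneSided A) := rfl
  rw [h3]
  exact Measurable.subtype_mk h1

lemma measurableSet_link (j : Fin r) (m : ℕ) :
    MeasurableSet {z : OneSided A | A j (z.1 m)} :=
  measurable_coord m (Set.toFinite {a : Fin r | A j a}).measurableSet

lemma measurable_Cmap (j : Fin r) : Measurable (Cmap (A := A) j) := by
  apply measurable_patch (measurableSet_link j 0)
    (F := fun z i => if i = 0 then j else z.1 (i - 1))
  · exact measurable_pi_lambda _ fun i => by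
      by_cases h : i = 0
      · simp only [h, if_pos rfl]; exact measurable_const
      · simp only [if_neg h]; exact measurable_coord _
  · intro z
    by_cases hl : A j (z.1 0)
    · rw [if_pos hl]; funext i; exact Cmap_coord hl i
    · rw [if_neg hl]; unfold Cmap; rw [dif_neg hl]

lemma measurable_Wmap {n : ℕ} (hn : 1 ≤ n) (w : Fin n → Fin r)
    (hw : AdmissibleWord A w) : Measurable (Wmap (A := A) hn w hw) := by
  apply measurable_patch (measurableSet_link (w ⟨n - 1, by omega⟩) 0)
    (F := fun z i => if h : i < n then w ⟨i, h⟩ else z.1 (i - n))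
  · exact measurable_pi_lambda _ fun i => by
      by_cases h : i < n
      · simp only [dif_pos h]; exact measurable_const
      · simp only [dif_neg h]; exact measurable_coord _
  · intro z
    by_cases hl : A (w ⟨n - 1, by omega⟩) (z.1 0)
    · rw [if_pos hl]; funext i; exact Wmap_coord hl i
    · rw [if_neg hl]; unfold Wmap; rw [dif_neg hl]

lemma image_shift1_measurable {j : Fin r} {F : Set (OneSided A)} (hF : MeasurableSet F)
    (hFj : ∀ x ∈ F, x.1 0 = j) : MeasurableSet (shift1 '' F) := by
  have hchar : shift1 '' F = {y : OneSided A | A j (y.1 0)} ∩ Cmap j ⁻¹' F := by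
    ext y
    constructor
    · rintro ⟨x, hx, rfl⟩
      have h0 : x.1 0 = j := hFj x hx
      have hA : A j ((shift1 x).1 0) := by
        have h1 := x.2 0
        rwa [h0] at h1
      refine ⟨hA, ?_⟩
      have heq : Cmap j (shift1 x) = x := by
        apply Subtype.ext; funext i
        rw [Cmap_coord hA i]
        rcases Nat.eq_zero_or_pos i with h | h
        · subst h; rw [if_pos rfl, h0]
        · rw [if_neg (by omega : ¬ i = 0)]
          show x.1 (i - 1 + 1) = x.1 i
          have e : i - 1 + 1 = i := by omega
          rw [e]
      show Cmap j (shift1 x) ∈ F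
      rw [heq]; exact hx
    · rintro ⟨hA, hx⟩
      have hA' : A j (y.1 0) := hA
      refine ⟨Cmap j y, hx, ?_⟩
      apply Subtype.ext; funext i
      show (Cmap j y).1 (i + 1) = y.1 i
      rw [Cmap_coord hA' (i + 1), if_neg (by omega : ¬ i + 1 = 0)]
      have e : i + 1 - 1 = i := by omega
      rw [e]
  rw [hchar]
  exact (measurableSet_link j 0).inter (measurable_Cmap j hF)


variable {φ : OneSided A → ℝ} {P : ℝ} {μ : Measure (OneSided A)}

lemma step (hpair : ConformalPair A φ P μ) (hφm : Measurable φ)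
    {j : Fin r} {F : Set (OneSided A)} (hF : MeasurableSet F)
    (hFj : ∀ x ∈ F, x.1 0 = j)
    {g : OneSided A → ℝ≥0∞} (hg : Measurable g) :
    ∫⁻ y in shift1 '' F, g y ∂μ =
      ∫⁻ x in F, g (shift1 x) * ENNReal.ofReal (Real.exp (P - φ x)) ∂μ := by
  set ρ : OneSided A → ℝ≥0∞ := fun x => ENNReal.ofReal (Real.exp (P - φ x)) with hρ
  have hρm : Measurable ρ := (measurable_const.sub hφm).exp.ennreal_ofReal
  have hmeq : μ.restrict (shift1 '' F) =
      Measure.map shift1 ((μ.restrict F).withDensity ρ) := by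
    ext B hB
    rw [Measure.map_apply measurable_shift1 hB,
      withDensity_apply _ (measurable_shift1 hB),
      Measure.restrict_restrict (measurable_shift1 hB), Measure.restrict_apply hB]
    have hset : shift1 '' (shift1 ⁻¹' B ∩ F) = B ∩ shift1 '' F := by
      ext y
      constructor
      · rintro ⟨x, ⟨hxB, hxF⟩, rfl⟩; exact ⟨hxB, x, hxF, rfl⟩
      · rintro ⟨hyB, x, hxF, rfl⟩; exact ⟨x, ⟨hyB, hxF⟩, rfl⟩
    rw [← hset, hpair.2 j _ ((measurable_shift1 hB).inter hF) fun x hx => hFj x hx.2]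
  calc ∫⁻ y in shift1 '' F, g y ∂μ
      = ∫⁻ y, g y ∂(Measure.map shift1 ((μ.restrict F).withDensity ρ)) := by rw [← hmeq]
    _ = ∫⁻ x, g (shift1 x) ∂((μ.restrict F).withDensity ρ) :=
        lintegral_map hg measurable_shift1
    _ = ∫⁻ x, (ρ * fun x => g (shift1 x)) x ∂(μ.restrict F) :=
        lintegral_withDensity_eq_lintegral_mul _ hρm (hg.comp measurable_shift1)
    _ = ∫⁻ x in F, g (shift1 x) * ρ x ∂μ := lintegral_congr fun x => mul_comm _ _

lemma measurable_birkhoff (hφm : Measurable φ) (m : ℕ) :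
    Measurable fun x : OneSided A =>
      ENNReal.ofReal (Real.exp ((m : ℝ) * P - ∑ k ∈ Finset.range m, φ (shift1^[k] x))) := by
  apply Measurable.ennreal_ofReal
  apply Measurable.exp
  apply Measurable.sub measurable_const
  exact Finset.measurable_sum _ fun k _ => hφm.comp (measurable_shift1.iterate k)

lemma iter (hpair : ConformalPair A φ P μ) (hφm : Measurable φ) :
    ∀ (m : ℕ) (F : Set (OneSided A)), MeasurableSet F →
    (∀ x ∈ F, ∀ y ∈ F, ∀ k < m, x.1 k = y.1 k) →
    MeasurableSet (shift1^[m] '' F) ∧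
    ∀ g : OneSided A → ℝ≥0∞, Measurable g →
      ∫⁻ y in shift1^[m] '' F, g y ∂μ =
      ∫⁻ x in F, g (shift1^[m] x) *
        ENNReal.ofReal (Real.exp ((m : ℝ) * P -
          ∑ k ∈ Finset.range m, φ (shift1^[k] x))) ∂μ := by
  intro m
  induction m with
  | zero =>
    intro F hF _
    refine ⟨by simpa [Set.image_id] using hF, fun g hg => ?_⟩
    simp [Set.image_id]
  | succ m ih =>
    intro F hF hagree
    rcases F.eq_empty_or_nonempty with rfl | ⟨x₀, hx₀⟩
    · simp
    have hFj : ∀ x ∈ F, x.1 0 = x₀.1 0 := fun x hx => hagree x hx x₀ hx₀ 0 (by omega)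
    have hF' : MeasurableSet (shift1 '' F) := image_shift1_measurable hF hFj
    have hagree' : ∀ x ∈ shift1 '' F, ∀ y ∈ shift1 '' F, ∀ k < m, x.1 k = y.1 k := by
      rintro _ ⟨x, hx, rfl⟩ _ ⟨y, hy, rfl⟩ k hk
      exact hagree x hx y hy (k + 1) (by omega)
    obtain ⟨hmeas', hint'⟩ := ih (shift1 '' F) hF' hagree'
    have himg : shift1^[m + 1] '' F = shift1^[m] '' (shift1 '' F) := by
      rw [Function.iterate_succ, Set.image_comp]
    refine ⟨by rw [himg]; exact hmeas', fun g hg => ?_⟩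
    have hg' : Measurable fun x' : OneSided A => g (shift1^[m] x') *
        ENNReal.ofReal (Real.exp ((m : ℝ) * P -
          ∑ k ∈ Finset.range m, φ (shift1^[k] x'))) :=
      (hg.comp (measurable_shift1.iterate m)).mul (measurable_birkhoff hφm m)
    rw [himg, hint' g hg, step hpair hφm hF hFj hg']
    refine lintegral_congr fun x => ?_
    rw [← Function.iterate_succ_apply, mul_assoc]
    congr 1
    rw [← ENNReal.ofReal_mul (Real.exp_nonneg _), ← Real.exp_add]
    congr 1
    rw [Finset.sum_range_succ' (fun k => φ (shift1^[k] x)) m]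
    simp only [Function.iterate_succ_apply, Function.iterate_zero_apply]
    push_cast
    ring_nf


lemma Tmap_coord {n : ℕ} {hn : 1 ≤ n} {w : Fin n → Fin r} {hw : AdmissibleWord A w}
    {z : OneSided A} (hA : A (w ⟨n - 1, by omega⟩) (z.1 n)) (i : ℕ) :
    (Tmap hn w hw z).1 i = if h : i < n then w ⟨i, h⟩ else z.1 i := by
  unfold Tmap
  rw [dif_pos hA]

lemma measurable_Tmap {n : ℕ} (hn : 1 ≤ n) (w : Fin n → Fin r)
    (hw : AdmissibleWord A w) : Measurable (Tmap (A := A) hn w hw) := by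
  apply measurable_patch (measurableSet_link (w ⟨n - 1, by omega⟩) n)
    (F := fun z i => if h : i < n then w ⟨i, h⟩ else z.1 i)
  · exact measurable_pi_lambda _ fun i => by
      by_cases h : i < n
      · simp only [dif_pos h]; exact measurable_const
      · simp only [dif_neg h]; exact measurable_coord _
  · intro z
    by_cases hl : A (w ⟨n - 1, by omega⟩) (z.1 n)
    · rw [if_pos hl]; funext i; exact Tmap_coord hl i
    · rw [if_neg hl]; unfold Tmap; rw [dif_neg hl]

lemma Wmap_section {n : ℕ} (hn : 1 ≤ n) (w : Fin n → Fin r) (hw : AdmissibleWord A w)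
    (z : OneSided A) (hz : ∀ i : ℕ, ∀ h : i < n, z.1 i = w ⟨i, h⟩) :
    Wmap hn w hw (shift1^[n] z) = z := by
  have hlink : A (w ⟨n - 1, by omega⟩) ((shift1^[n] z).1 0) := by
    rw [shift_iter_coord, Nat.zero_add]
    have h1 := z.2 (n - 1)
    have e : n - 1 + 1 = n := by omega
    rw [e, hz (n - 1) (by omega)] at h1
    exact h1
  apply Subtype.ext; funext i
  rw [Wmap_coord hlink i]
  by_cases h : i < n
  · rw [dif_pos h, hz i h]
  · rw [dif_neg h, shift_iter_coord]
    have e : i - n + n = i := by omega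
    rw [e]

lemma Wmap_eq_Tmap {n : ℕ} (hn : 1 ≤ n) (w : Fin n → Fin r) (hw : AdmissibleWord A w)
    (x : OneSided A) (hl : A (w ⟨n - 1, by omega⟩) (x.1 n)) :
    Wmap hn w hw (shift1^[n] x) = Tmap hn w hw x := by
  have hlink : A (w ⟨n - 1, by omega⟩) ((shift1^[n] x).1 0) := by
    rw [shift_iter_coord, Nat.zero_add]
    exact hl
  apply Subtype.ext; funext i
  rw [Wmap_coord hlink i, Tmap_coord hl i]
  by_cases h : i < n
  · rw [dif_pos h, dif_pos h]
  · rw [dif_neg h, dif_neg h, shift_iter_coord]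
    have e : i - n + n = i := by omega
    rw [e]

lemma shift_iter_Tmap {n : ℕ} (hn : 1 ≤ n) (w : Fin n → Fin r) (hw : AdmissibleWord A w)
    (x : OneSided A) (hl : A (w ⟨n - 1, by omega⟩) (x.1 n)) :
    shift1^[n] (Tmap hn w hw x) = shift1^[n] x := by
  apply Subtype.ext; funext i
  rw [shift_iter_coord, shift_iter_coord, Tmap_coord hl, dif_neg (by omega : ¬ i + n < n)]

end Scratch


open Scratch in
/-- If `(P, μ)` is a conformal pair for a Hölder `φ` on a transitive one-sided
subshift, `v` and `w` are admissible words of length `n ≥ 1`, and `T` is the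
map replacing the first `n` coordinates by `w` on
`Dom = {z ∈ [v] : A (w (n−1)) (z n)}`, then `T` is injective on `Dom` and
`μ(T '' E) = ∫_E exp(∑_{k<n} (φ(σ^k (T z)) − φ(σ^k z))) dμ` for Borel
`E ⊆ Dom`. -/
theorem conformal_measure_word_holonomy
    {A : Fin r → Fin r → Prop} (htrans : Transitive1 A)
    (φ : OneSided A → ℝ) (hφ : IsHolderWrt dist1 φ)
    (P : ℝ) (μ : Measure (OneSided A)) (hpair : ConformalPair A φ P μ)
    (n : ℕ) (hn : 1 ≤ n) (v w : Fin n → Fin r)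
    (hv : AdmissibleWord A v) (hw : AdmissibleWord A w)
    (hvne : (Cyl A v).Nonempty) (hwne : (Cyl A w).Nonempty) :
    Set.InjOn (Tmap hn w hw)
        (Cyl A v ∩ {z : OneSided A | A (w ⟨n - 1, by omega⟩) (z.1 n)}) ∧
      ∀ E : Set (OneSided A), MeasurableSet E →
        E ⊆ Cyl A v ∩ {z : OneSided A | A (w ⟨n - 1, by omega⟩) (z.1 n)} →
        μ (Tmap hn w hw '' E) =
          ∫⁻ z in E, ENNReal.ofReal (Real.exp (∑ k ∈ Finset.range n,
            (φ (shift1^[k] (Tmap hn w hw z)) - φ (shift1^[k] z)))) ∂μ := by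
  classical
  have hφm : Measurable φ := measurable_of_holder φ hφ
  constructor
  · intro x hx y hy hxy
    apply Subtype.ext; funext i
    by_cases h : i < n
    · exact (hx.1 ⟨i, h⟩).trans (hy.1 ⟨i, h⟩).symm
    · have hcoord := congrArg (fun z : OneSided A => z.1 i) hxy
      rw [Tmap_coord hx.2 i, Tmap_coord hy.2 i, dif_neg h, dif_neg h] at hcoord
      exact hcoord
  · intro E hE hEsub
    set Tw := Tmap hn w hw with hTw
    have hlinkv : ∀ x ∈ E, A (v ⟨n - 1, by omega⟩) (x.1 n) := by
      intro x hx
      have h1 := x.2 (n - 1)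
      have e : n - 1 + 1 = n := by omega
      rw [e] at h1
      have h2 : x.1 (n - 1) = v ⟨n - 1, by omega⟩ := (hEsub hx).1 ⟨n - 1, by omega⟩
      rwa [h2] at h1
    have hchar : Tw '' E =
        (Cyl A w ∩ {y : OneSided A | A (v ⟨n - 1, by omega⟩) (y.1 n)}) ∩
          Tmap hn v hv ⁻¹' E := by
      ext y
      constructor
      · rintro ⟨x, hx, rfl⟩
        have hxl : A (w ⟨n - 1, by omega⟩) (x.1 n) := (hEsub hx).2
        have hcylw : Tw x ∈ Cyl A w := by
          intro i
          have := Tmap_coord (hn := hn) (hw := hw) hxl (i : ℕ)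
          rw [this, dif_pos i.2]
        have hTn : (Tw x).1 n = x.1 n := by
          rw [Tmap_coord hxl n, dif_neg (by omega : ¬ n < n)]
        have hvl : A (v ⟨n - 1, by omega⟩) ((Tw x).1 n) := by
          rw [hTn]; exact hlinkv x hx
        refine ⟨⟨hcylw, hvl⟩, ?_⟩
        show Tmap hn v hv (Tw x) ∈ E
        have hTvx : Tmap hn v hv (Tw x) = x := by
          apply Subtype.ext; funext i
          rw [Tmap_coord hvl i]
          by_cases h : i < n
          · rw [dif_pos h]
            exact ((hEsub hx).1 ⟨i, h⟩).symm
          · rw [dif_neg h, Tmap_coord hxl i, dif_neg h]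
        rw [hTvx]; exact hx
      · rintro ⟨⟨hyw, hyl⟩, hyE⟩
        have hyE' : Tmap hn v hv y ∈ E := hyE
        have hxl : A (w ⟨n - 1, by omega⟩) ((Tmap hn v hv y).1 n) := (hEsub hyE').2
        refine ⟨Tmap hn v hv y, hyE', ?_⟩
        apply Subtype.ext; funext i
        rw [Tmap_coord hxl i]
        by_cases h : i < n
        · rw [dif_pos h]
          exact (hyw ⟨i, h⟩).symm
        · rw [dif_neg h, Tmap_coord hyl i, dif_neg h]
    have hcylw : MeasurableSet (Cyl A w) := by
      have : Cyl A w = ⋂ i : Fin n, (fun x : OneSided A => x.1 i) ⁻¹' {w i} := by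
        ext x
        simp only [Cyl, Set.mem_setOf_eq, Set.mem_iInter, Set.mem_preimage,
          Set.mem_singleton_iff]
      rw [this]
      exact MeasurableSet.iInter fun i =>
        measurable_coord (i : ℕ) (measurableSet_singleton _)
    have hTwEmeas : MeasurableSet (Tw '' E) := by
      rw [hchar]
      exact (hcylw.inter (measurableSet_link (v ⟨n - 1, by omega⟩) n)).inter
        (measurable_Tmap hn v hv hE)
    have hsubW : Tw '' E ⊆ Cyl A w := by
      rw [hchar]; exact fun y hy => hy.1.1
    have hagreeE : ∀ x ∈ E, ∀ y ∈ E, ∀ k < n, x.1 k = y.1 k := by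
      intro x hx y hy k hk
      exact ((hEsub hx).1 ⟨k, hk⟩).trans (((hEsub hy).1 ⟨k, hk⟩)).symm
    have hagreeW : ∀ x ∈ Tw '' E, ∀ y ∈ Tw '' E, ∀ k < n, x.1 k = y.1 k := by
      intro x hx y hy k hk
      exact ((hsubW hx) ⟨k, hk⟩).trans ((hsubW hy) ⟨k, hk⟩).symm
    set g : OneSided A → ℝ≥0∞ := fun ξ => ENNReal.ofReal (Real.exp
      ((∑ k ∈ Finset.range n, φ (shift1^[k] (Wmap hn w hw ξ))) - (n : ℝ) * P)) with hgdef
    have hgm : Measurable g := by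
      apply Measurable.ennreal_ofReal
      apply Measurable.exp
      apply Measurable.sub _ measurable_const
      exact Finset.measurable_sum _ fun k _ =>
        hφm.comp ((measurable_shift1.iterate k).comp (measurable_Wmap hn w hw))
    have h1 := (iter hpair hφm n (Tw '' E) hTwEmeas hagreeW).2 g hgm
    have h2 := (iter hpair hφm n E hE hagreeE).2 g hgm
    have himg : shift1^[n] '' (Tw '' E) = shift1^[n] '' E := by
      rw [Set.image_image]
      exact Set.image_congr fun x hx => shift_iter_Tmap hn w hw x (hEsub hx).2
    calc μ (Tw '' E) = ∫⁻ y in Tw '' E, 1 ∂μ := (setLIntegral_one _).symm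
      _ = ∫⁻ y in Tw '' E, g (shift1^[n] y) *
            ENNReal.ofReal (Real.exp ((n : ℝ) * P -
              ∑ k ∈ Finset.range n, φ (shift1^[k] y))) ∂μ := by
          refine setLIntegral_congr_fun hTwEmeas (
            fun y hy => ?_)
          have hy' : ∀ i : ℕ, ∀ h : i < n, y.1 i = w ⟨i, h⟩ :=
            fun i h => hsubW hy ⟨i, h⟩
          have hsec : Wmap hn w hw (shift1^[n] y) = y := Wmap_section hn w hw y hy'
          simp only [hgdef]
          rw [hsec, ← ENNReal.ofReal_mul (Real.exp_nonneg _), ← Real.exp_add]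
          have he : ((∑ k ∈ Finset.range n, φ (shift1^[k] y)) - (n : ℝ) * P) +
              ((n : ℝ) * P - ∑ k ∈ Finset.range n, φ (shift1^[k] y)) = 0 := by ring
          rw [he, Real.exp_zero, ENNReal.ofReal_one]
      _ = ∫⁻ ξ in shift1^[n] '' (Tw '' E), g ξ ∂μ := h1.symm
      _ = ∫⁻ ξ in shift1^[n] '' E, g ξ ∂μ := by rw [himg]
      _ = ∫⁻ x in E, g (shift1^[n] x) *
            ENNReal.ofReal (Real.exp ((n : ℝ) * P -
              ∑ k ∈ Finset.range n, φ (shift1^[k] x))) ∂μ := h2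
      _ = ∫⁻ z in E, ENNReal.ofReal (Real.exp (∑ k ∈ Finset.range n,
            (φ (shift1^[k] (Tw z)) - φ (shift1^[k] z)))) ∂μ := by
          refine setLIntegral_congr_fun hE (
            fun x hx => ?_)
          have hxl : A (w ⟨n - 1, by omega⟩) (x.1 n) := (hEsub hx).2
          have hWT : Wmap hn w hw (shift1^[n] x) = Tmap hn w hw x :=
            Wmap_eq_Tmap hn w hw x hxl
          simp only [hgdef]
          rw [hWT, ← ENNReal.ofReal_mul (Real.exp_nonneg _), ← Real.exp_add,
            Finset.sum_sub_distrib]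
          congr 2
          ring
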